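/- Let δ > 0 and s̄ ∈ [0,1). There exists an increasing continuous function ω (depending on δ and s̄) with ω(0) = 0 such that for every s ∈ [0, s̄] and every η ≥ 0, the integral of |y|^{-(d+s)} over the set B_η \ (B_δ(δ e_d) ∪ B_δ(−δ e_d)) is at most ω(η). -/

import Mathlib

open MeasureTheory Metric Filter Set
open scoped ENNReal

/-- Volume of the unit ball in `ℝ^d` (the constant `ω_d`). -/
noncomputable def unitBallVol (d : ℕ) : ℝ :=
  (volume (Metric.ball (0 : EuclideanSpace ℝ (Fin d)) 1)).toReal

/-- `χ_{ℝ^d ∖ E}(y) - χ_E(y)`. -/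
noncomputable def chiDiff {d : ℕ} (E : Set (EuclideanSpace ℝ (Fin d)))
    (y : EuclideanSpace ℝ (Fin d)) : ℝ :=
  Set.indicator Eᶜ (fun _ => (1:ℝ)) y - Set.indicator E (fun _ => (1:ℝ)) y

/-- The unit vector `e_d` (last coordinate direction) in `ℝ^d`. -/
noncomputable def ed (d : ℕ) : EuclideanSpace ℝ (Fin d) :=
  if h : 0 < d then EuclideanSpace.single (⟨d - 1, by omega⟩ : Fin d) 1 else 0

/-- `H` is the value of the `s`-fractional curvature of `E` at `x`, defined as the
principal value `lim_{r→0⁺} ∫_{ℝ^d ∖ B_r(x)} (χ_{Eᶜ}(y) - χ_E(y))/|x-y|^{d+s} dy`. -/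
def HasFracCurv {d : ℕ} (s : ℝ) (E : Set (EuclideanSpace ℝ (Fin d)))
    (x : EuclideanSpace ℝ (Fin d)) (H : ℝ) : Prop :=
  Tendsto (fun r : ℝ => ∫ y in (Metric.ball x r)ᶜ, chiDiff E y / ‖y - x‖ ^ ((d:ℝ) + s))
    (nhdsWithin 0 (Set.Ioi 0)) (nhds H)

/-- Uniform two-sided (interior and exterior) tangent ball condition: the standard
geometric characterization of a set with compact boundary of class `C^{1,1}`. -/
def TwoSidedBallCond {d : ℕ} (E : Set (EuclideanSpace ℝ (Fin d))) : Prop :=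
  ∃ δ > 0, ∀ x ∈ frontier E, ∃ ν : EuclideanSpace ℝ (Fin d), ‖ν‖ = 1 ∧
    Metric.ball (x - δ • ν) δ ⊆ E ∧ Metric.ball (x + δ • ν) δ ⊆ Eᶜ

/-- The `0`-fractional curvature `H^0(x,E)`, defined with the cutoff radius
`R = diam E + 1 > diam E` (the value is independent of the choice of `R > diam E`). -/
noncomputable def H0 {d : ℕ} (E : Set (EuclideanSpace ℝ (Fin d)))
    (x : EuclideanSpace ℝ (Fin d)) : ℝ :=
  limUnder (nhdsWithin (0:ℝ) (Set.Ioi 0))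
    (fun r => ∫ y in Metric.ball x (Metric.diam E + 1) \ Metric.ball x r,
      chiDiff E y / ‖y - x‖ ^ (d:ℝ))
  - d * unitBallVol d * Real.log (Metric.diam E + 1)

/-- The `s`-Riesz curvature `K^s(x,E) = -2 ∫_E |x-y|^{-(d+s)} dy` of a compact set. -/
noncomputable def Ks {d : ℕ} (s : ℝ) (E : Set (EuclideanSpace ℝ (Fin d)))
    (x : EuclideanSpace ℝ (Fin d)) : ℝ :=
  -2 * ∫ y in E, 1 / ‖x - y‖ ^ ((d:ℝ) + s)

/-- Outer Minkowski curvature `κ_r^{ou}(x,E)` relative to a normal (vector) field `ν`. -/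
noncomputable def kappaOut {d : ℕ} (E : Set (EuclideanSpace ℝ (Fin d)))
    (ν : EuclideanSpace ℝ (Fin d) → EuclideanSpace ℝ (Fin d)) (r : ℝ)
    (x : EuclideanSpace ℝ (Fin d)) : ℝ :=
  if Metric.infDist (x + r • ν x) E = r then
    (1 / (2 * r)) * LinearMap.det
      ((ContinuousLinearMap.id ℝ (EuclideanSpace ℝ (Fin d)) + r • fderiv ℝ ν x).toLinearMap)
  else 0

/-- Inner Minkowski curvature `κ_r^{in}(x,E)` relative to a normal (vector) field `ν`. -/
noncomputable def kappaIn {d : ℕ} (E : Set (EuclideanSpace ℝ (Fin d)))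
    (ν : EuclideanSpace ℝ (Fin d) → EuclideanSpace ℝ (Fin d)) (r : ℝ)
    (x : EuclideanSpace ℝ (Fin d)) : ℝ :=
  if Metric.infDist (x - r • ν x) Eᶜ = r then
    -(1 / (2 * r)) * LinearMap.det
      ((ContinuousLinearMap.id ℝ (EuclideanSpace ℝ (Fin d)) - r • fderiv ℝ ν x).toLinearMap)
  else 0

/-- Regularized Minkowski curvature `κ_r^f(x,E) = ∫_0^1 (-s f'(s)) κ_{rs}(x,E) ds`. -/
noncomputable def kappaF {d : ℕ} (f : ℝ → ℝ) (E : Set (EuclideanSpace ℝ (Fin d)))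
    (ν : EuclideanSpace ℝ (Fin d) → EuclideanSpace ℝ (Fin d)) (r : ℝ)
    (x : EuclideanSpace ℝ (Fin d)) : ℝ :=
  ∫ t in Set.Ioc (0:ℝ) 1, (-t * deriv f t) * (kappaOut E ν (r*t) x + kappaIn E ν (r*t) x)

lemma abs_coord_le_norm {d : ℕ} (y : EuclideanSpace ℝ (Fin d)) (i : Fin d) : |y i| ≤ ‖y‖ := by
  have h := abs_real_inner_le_norm (EuclideanSpace.single i (1:ℝ)) y
  simpa [EuclideanSpace.inner_single_left] using h

lemma slab_vol {d : ℕ} (i₀ : Fin d) (r h : ℝ) (hr : 0 ≤ r) (hh : 0 ≤ h) :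
    volume {y : EuclideanSpace ℝ (Fin d) | ‖y‖ ≤ r ∧ |y i₀| ≤ h}
      ≤ ENNReal.ofReal ((2*r)^(d-1) * (2*h)) := by
  classical
  set c : Fin d → ℝ := fun i => if i = i₀ then h else r with hc
  have hsub : {y : EuclideanSpace ℝ (Fin d) | ‖y‖ ≤ r ∧ |y i₀| ≤ h}
      ⊆ (MeasurableEquiv.toLp 2 (Fin d → ℝ)).symm ⁻¹'
        (Set.univ.pi fun i => Set.Icc (-(c i)) (c i)) := by
    intro y hy
    intro i _
    have hci : |y i| ≤ c i := by
      by_cases hi : i = i₀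
      · subst hi; simpa [hc] using hy.2
      · simp only [hc, if_neg hi]
        exact (abs_coord_le_norm y i).trans hy.1
    exact ⟨(abs_le.mp hci).1, (abs_le.mp hci).2⟩
  calc volume {y : EuclideanSpace ℝ (Fin d) | ‖y‖ ≤ r ∧ |y i₀| ≤ h}
      ≤ volume ((MeasurableEquiv.toLp 2 (Fin d → ℝ)).symm ⁻¹'
          (Set.univ.pi fun i => Set.Icc (-(c i)) (c i))) := measure_mono hsub
    _ = volume (Set.univ.pi fun i => Set.Icc (-(c i)) (c i)) :=
        (EuclideanSpace.volume_preserving_symm_measurableEquiv_toLp (Fin d)).measure_preimage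
          (MeasurableSet.univ_pi fun i => measurableSet_Icc).nullMeasurableSet
    _ = ∏ i, volume (Set.Icc (-(c i)) (c i)) := volume_pi_pi _
    _ = ∏ i, ENNReal.ofReal (2 * c i) := by
        refine Finset.prod_congr rfl fun i _ => ?_
        rw [Real.volume_Icc]; ring_nf
    _ ≤ ENNReal.ofReal ((2*r)^(d-1) * (2*h)) := by
        rw [← Finset.mul_prod_erase Finset.univ _ (Finset.mem_univ i₀)]
        have h1 : ∀ i ∈ Finset.univ.erase i₀, ENNReal.ofReal (2 * c i) = ENNReal.ofReal (2*r) := by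
          intro i hi
          simp [hc, Finset.mem_erase.mp hi |>.1]
        rw [Finset.prod_congr rfl h1, Finset.prod_const,
          Finset.card_erase_of_mem (Finset.mem_univ i₀), Finset.card_univ, Fintype.card_fin]
        rw [← ENNReal.ofReal_pow (by linarith), ← ENNReal.ofReal_mul (by positivity)]
        simp [hc, mul_comm]

lemma geom_bound {d : ℕ} (hd : 0 < d) (δ : ℝ) (hδ : 0 < δ) (y : EuclideanSpace ℝ (Fin d))
    (h1 : y ∉ Metric.ball (δ • ed d) δ) (h2 : y ∉ Metric.ball (-(δ • ed d)) δ) :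
    2 * δ * |y (⟨d - 1, by omega⟩ : Fin d)| ≤ ‖y‖^2 := by
  have hed : ed d = EuclideanSpace.single (⟨d - 1, by omega⟩ : Fin d) (1:ℝ) := dif_pos hd
  have hnorm : ‖ed d‖ = 1 := by rw [hed, EuclideanSpace.norm_single]; norm_num
  have hinner : inner ℝ y (ed d) = y (⟨d - 1, by omega⟩ : Fin d) := by
    rw [hed]
    simpa using EuclideanSpace.inner_single_right (𝕜 := ℝ) (⟨d - 1, by omega⟩ : Fin d) 1 y
  set t := y (⟨d - 1, by omega⟩ : Fin d) with ht
  have hys : ‖δ • ed d‖ = δ := by rw [norm_smul, hnorm, Real.norm_eq_abs, abs_of_pos hδ, mul_one]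
  have e1 : δ ≤ ‖y - δ • ed d‖ := by
    have := h1; rw [Metric.mem_ball, not_lt, dist_eq_norm] at this; exact this
  have e2 : δ ≤ ‖y + δ • ed d‖ := by
    have := h2; rw [Metric.mem_ball, not_lt, dist_eq_norm, sub_neg_eq_add] at this; exact this
  have q1 : δ^2 ≤ ‖y - δ • ed d‖^2 := pow_le_pow_left₀ hδ.le e1 2
  have q2 : δ^2 ≤ ‖y + δ • ed d‖^2 := pow_le_pow_left₀ hδ.le e2 2
  rw [norm_sub_sq_real, real_inner_smul_right, hinner, hys] at q1
  rw [norm_add_sq_real, real_inner_smul_right, hinner, hys] at q2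
  have habs : |2 * δ * t| ≤ ‖y‖^2 := abs_le.mpr ⟨by nlinarith, by nlinarith⟩
  calc 2 * δ * |t| = |2 * δ * t| := by rw [abs_mul, abs_of_pos (by linarith : (0:ℝ) < 2*δ)]
    _ ≤ ‖y‖^2 := habs

lemma measA {d : ℕ} (hd : 0 < d) (δ : ℝ) (hδ : 0 < δ) (r : ℝ) (hr : 0 ≤ r) :
    volume {y : EuclideanSpace ℝ (Fin d) |
        y ∉ (Metric.ball (δ • ed d) δ ∪ Metric.ball (-(δ • ed d)) δ) ∧ ‖y‖ ≤ r}
      ≤ ENNReal.ofReal ((2*r)^(d-1) * (2*(r^2/(2*δ)))) := by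
  have hsub : {y : EuclideanSpace ℝ (Fin d) |
        y ∉ (Metric.ball (δ • ed d) δ ∪ Metric.ball (-(δ • ed d)) δ) ∧ ‖y‖ ≤ r}
      ⊆ {y : EuclideanSpace ℝ (Fin d) | ‖y‖ ≤ r ∧ |y (⟨d - 1, by omega⟩ : Fin d)| ≤ r^2/(2*δ)} := by
    intro y hy
    refine ⟨hy.2, ?_⟩
    have hg := geom_bound hd δ hδ y (fun h => hy.1 (Or.inl h)) (fun h => hy.1 (Or.inr h))
    have hr2 : ‖y‖^2 ≤ r^2 := pow_le_pow_left₀ (norm_nonneg y) hy.2 2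
    rw [le_div_iff₀ (by linarith)]
    nlinarith
  exact (measure_mono hsub).trans (slab_vol _ r _ hr (by positivity))

lemma exists_dyadic {η t : ℝ} (hη : 0 < η) (ht : 0 < t) (htη : t < η) :
    ∃ k : ℕ, t < η * (1/2)^k ∧ η * (1/2)^(k+1) ≤ t := by
  have hP : ∃ n : ℕ, η * (1/2)^(n+1) ≤ t := by
    obtain ⟨n, hn⟩ := exists_pow_lt_of_lt_one (div_pos ht hη) (by norm_num : (1/2:ℝ) < 1)
    refine ⟨n, ?_⟩
    have h1 : ((1:ℝ)/2)^(n+1) ≤ (1/2)^n :=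
      pow_le_pow_of_le_one (by norm_num) (by norm_num) (Nat.le_succ n)
    have h2 := h1.trans_lt hn
    rw [lt_div_iff₀ hη] at h2
    linarith
  classical
  refine ⟨Nat.find hP, ?_, Nat.find_spec hP⟩
  rcases Nat.eq_zero_or_pos (Nat.find hP) with h0 | hpos
  · rw [h0]; simpa using htη
  · have hmin := Nat.find_min hP (Nat.sub_lt hpos one_pos)
    rw [not_le] at hmin
    have heq : Nat.find hP - 1 + 1 = Nat.find hP := Nat.succ_pred_eq_of_pos hpos
    rwa [heq] at hmin

lemma term_real (d : ℕ) (hd : 0 < d) (δ sbar s η : ℝ) (hδ : 0 < δ) (hsb0 : 0 ≤ sbar)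
    (hsb1 : sbar < 1) (hs0 : 0 ≤ s) (hssb : s ≤ sbar) (hη : 0 < η) (k : ℕ) :
    ((η * (1/2:ℝ)^(k+1)) ^ ((d:ℝ) + s))⁻¹ *
      ((2*(2*(η * (1/2:ℝ)^(k+1))))^(d-1) * (2*((2*(η * (1/2:ℝ)^(k+1)))^2/(2*δ))))
      ≤ (4^d/δ) * η^(1-s) * ((1/2:ℝ)^(1-sbar))^k := by
  set b := η * (1/2:ℝ)^(k+1) with hbdef
  have hb : 0 < b := by positivity
  have e0 : (2*(2*b))^(d-1) * (2*((2*b)^2/(2*δ))) = (4^(d-1) * b^(d-1)) * (4 * b^2 / δ) := by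
    rw [show (2*(2*b)) = 4*b by ring, mul_pow]
    field_simp; ring
  have e3 : (b:ℝ)^(d-1) * b^2 = b^(d+1) := by rw [← pow_add]; congr 1; omega
  have e4 : (b:ℝ)^(d+1) = b ^ ((d:ℝ)+1) := by
    rw [← Real.rpow_natCast b (d+1)]; push_cast; ring_nf
  have e5 : (b ^ ((d:ℝ)+s))⁻¹ * b ^ ((d:ℝ)+1) = b ^ (1-s) := by
    rw [← Real.rpow_neg hb.le, ← Real.rpow_add hb]; ring_nf
  have step1 : (b ^ ((d:ℝ) + s))⁻¹ * ((2*(2*b))^(d-1) * (2*((2*b)^2/(2*δ))))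
      = (4^(d-1) * 4 / δ) * b ^ (1-s) := by
    rw [e0]
    calc (b ^ ((d:ℝ) + s))⁻¹ * ((4^(d-1) * b^(d-1)) * (4 * b^2 / δ))
        = (4^(d-1) * 4 / δ) * ((b ^ ((d:ℝ)+s))⁻¹ * (b^(d-1) * b^2)) := by ring
      _ = (4^(d-1) * 4 / δ) * b ^ (1-s) := by rw [e3, e4, e5]
  rw [step1, show ((4:ℝ)^(d-1) * 4 = 4^d) by rw [← pow_succ]; congr 1; omega]
  have e7 : b ^ (1-s) = η^(1-s) * (((1/2:ℝ)^(k+1)) ^ (1-s)) := Real.mul_rpow hη.le (by positivity)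
  have e8 : (((1/2:ℝ)^(k+1)) ^ (1-s)) = ((1/2:ℝ)^(1-s))^(k+1) := by
    rw [← Real.rpow_natCast (1/2:ℝ) (k+1), ← Real.rpow_mul (by norm_num), mul_comm,
      Real.rpow_mul (by norm_num), Real.rpow_natCast]
  have e9 : ((1/2:ℝ)^(1-s) : ℝ) ≤ (1/2:ℝ)^(1-sbar) :=
    Real.rpow_le_rpow_of_exponent_ge (by norm_num) (by norm_num) (by linarith)
  have e10 : ((1/2:ℝ)^(1-s))^(k+1) ≤ ((1/2:ℝ)^(1-sbar))^(k+1) :=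
    pow_le_pow_left₀ (by positivity) e9 _
  have e11 : ((1/2:ℝ)^(1-sbar))^(k+1) ≤ ((1/2:ℝ)^(1-sbar))^k :=
    pow_le_pow_of_le_one (by positivity)
      (Real.rpow_le_one (by norm_num) (by norm_num) (by linarith)) (Nat.le_succ k)
  have efin : b ^ (1-s) ≤ η^(1-s) * ((1/2:ℝ)^(1-sbar))^k := by
    rw [e7, e8]
    exact mul_le_mul_of_nonneg_left (e10.trans e11) (Real.rpow_nonneg hη.le _)
  calc (4:ℝ)^d/δ * b^(1-s) ≤ (4:ℝ)^d/δ * (η^(1-s) * ((1/2:ℝ)^(1-sbar))^k) :=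
        mul_le_mul_of_nonneg_left efin (by positivity)
    _ = (4^d/δ) * η^(1-s) * ((1/2:ℝ)^(1-sbar))^k := by ring

lemma key_bound (d : ℕ) (hd : 0 < d) (δ sbar s η : ℝ) (hδ : 0 < δ) (hsb0 : 0 ≤ sbar)
    (hsb1 : sbar < 1) (hs0 : 0 ≤ s) (hssb : s ≤ sbar) (hη : 0 < η) :
    (∫ y in Metric.ball (0 : EuclideanSpace ℝ (Fin d)) η \
        (Metric.ball (δ • ed d) δ ∪ Metric.ball (-(δ • ed d)) δ),
      1 / ‖y‖ ^ ((d:ℝ) + s)) ≤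
    (4^d/δ) * (1 - (1/2:ℝ)^(1-sbar))⁻¹ * (η^(1-sbar) + η^((d:ℝ))) := by
  set U := Metric.ball (δ • ed d) δ ∪ Metric.ball (-(δ • ed d)) δ with hU
  set S := Metric.ball (0 : EuclideanSpace ℝ (Fin d)) η \ U with hS
  set ρ := (1/2:ℝ)^(1-sbar) with hρ
  have hρ0 : 0 < ρ := Real.rpow_pos_of_pos (by norm_num) _
  have hρ1 : ρ < 1 := Real.rpow_lt_one (by norm_num) (by norm_num) (by linarith)
  have h1ρ : 0 < (1-ρ)⁻¹ := inv_pos.mpr (by linarith)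
  set C0 := (4:ℝ)^d/δ with hC0
  have hC0pos : 0 < C0 := by positivity
  have hD1 : (1:ℝ) ≤ (d:ℝ) := by exact_mod_cast hd
  have hDs : (0:ℝ) < (d:ℝ) + s := by linarith
  have hmeas : Measurable fun y : EuclideanSpace ℝ (Fin d) => 1 / ‖y‖ ^ ((d:ℝ) + s) :=
    measurable_const.div ((continuous_norm.rpow_const fun y => Or.inr hDs.le).measurable)
  have hpos : 0 ≤ᵐ[volume.restrict S] fun y : EuclideanSpace ℝ (Fin d) => 1 / ‖y‖ ^ ((d:ℝ) + s) :=
    Filter.Eventually.of_forall fun y => by positivity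
  rw [integral_eq_lintegral_of_nonneg_ae hpos hmeas.aestronglyMeasurable]
  set ann : ℕ → Set (EuclideanSpace ℝ (Fin d)) := fun k =>
    Metric.ball (0 : EuclideanSpace ℝ (Fin d)) (η * (1/2)^k) \
      Metric.ball (0 : EuclideanSpace ℝ (Fin d)) (η * (1/2)^(k+1)) with hann
  have hcover : S ⊆ {0} ∪ ⋃ k, (S ∩ ann k) := by
    intro y hy
    by_cases hy0 : y = 0
    · exact Or.inl (by simp [hy0])
    · refine Or.inr (Set.mem_iUnion.mpr ?_)
      have hyn : 0 < ‖y‖ := norm_pos_iff.mpr hy0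
      have hyη : ‖y‖ < η := by
        have := hy.1; rwa [mem_ball_zero_iff] at this
      obtain ⟨k, hk1, hk2⟩ := exists_dyadic hη hyn hyη
      exact ⟨k, hy, mem_ball_zero_iff.mpr hk1,
        fun hc => (not_lt.mpr hk2) (mem_ball_zero_iff.mp hc)⟩
  have hterm : ∀ k : ℕ, (∫⁻ y in S ∩ ann k, ENNReal.ofReal (1 / ‖y‖ ^ ((d:ℝ) + s)))
      ≤ ENNReal.ofReal (C0 * η^(1-s) * ρ^k) := by
    intro k
    set b := η * (1/2:ℝ)^(k+1) with hb
    have hbpos : 0 < b := by positivity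
    have hb1 : ∀ y ∈ S ∩ ann k, ENNReal.ofReal (1 / ‖y‖ ^ ((d:ℝ) + s))
        ≤ ENNReal.ofReal ((b ^ ((d:ℝ) + s))⁻¹) := by
      intro y hy
      have hyb : b ≤ ‖y‖ := by
        have := hy.2.2
        rwa [mem_ball_zero_iff, not_lt] at this
      refine ENNReal.ofReal_le_ofReal ?_
      rw [one_div]
      exact inv_anti₀ (Real.rpow_pos_of_pos hbpos _)
        (Real.rpow_le_rpow hbpos.le hyb hDs.le)
    have hμ : volume (S ∩ ann k) ≤ ENNReal.ofReal ((2*(2*b))^(d-1) * (2*((2*b)^2/(2*δ)))) := by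
      refine (measure_mono ?_).trans (measA hd δ hδ (2*b) (by positivity))
      intro y hy
      refine ⟨hy.1.2, ?_⟩
      have h1 : ‖y‖ < η * (1/2)^k := by
        have := hy.2.1; rwa [mem_ball_zero_iff] at this
      have h2 : η * (1/2:ℝ)^k = 2*b := by rw [hb]; ring
      linarith [h2 ▸ h1]
    calc (∫⁻ y in S ∩ ann k, ENNReal.ofReal (1 / ‖y‖ ^ ((d:ℝ) + s)))
        ≤ ∫⁻ _ in S ∩ ann k, ENNReal.ofReal ((b ^ ((d:ℝ) + s))⁻¹) :=
          setLIntegral_mono measurable_const hb1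
      _ = ENNReal.ofReal ((b ^ ((d:ℝ) + s))⁻¹) * volume (S ∩ ann k) := setLIntegral_const _ _
      _ ≤ ENNReal.ofReal ((b ^ ((d:ℝ) + s))⁻¹) *
            ENNReal.ofReal ((2*(2*b))^(d-1) * (2*((2*b)^2/(2*δ)))) := mul_le_mul_right hμ _
      _ = ENNReal.ofReal ((b ^ ((d:ℝ) + s))⁻¹ * ((2*(2*b))^(d-1) * (2*((2*b)^2/(2*δ))))) := by
          rw [← ENNReal.ofReal_mul (by positivity)]
      _ ≤ ENNReal.ofReal (C0 * η^(1-s) * ρ^k) :=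
          ENNReal.ofReal_le_ofReal
            (term_real d hd δ sbar s η hδ hsb0 hsb1 hs0 hssb hη k)
  have hzero : ∫⁻ y in ({0} : Set (EuclideanSpace ℝ (Fin d))),
      ENNReal.ofReal (1 / ‖y‖ ^ ((d:ℝ) + s)) = 0 := by
    refine le_antisymm ?_ zero_le
    have hle : ∀ y ∈ ({0} : Set (EuclideanSpace ℝ (Fin d))),
        ENNReal.ofReal (1 / ‖y‖ ^ ((d:ℝ) + s)) ≤ (fun _ => (0:ℝ≥0∞)) y := by
      intro y hy
      rw [Set.mem_singleton_iff] at hy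
      subst hy
      simp [Real.zero_rpow (ne_of_gt hDs)]
    simpa using setLIntegral_mono measurable_const hle
  have hlin : (∫⁻ y in S, ENNReal.ofReal (1 / ‖y‖ ^ ((d:ℝ) + s)))
      ≤ ENNReal.ofReal (C0 * (1-ρ)⁻¹ * η^(1-s)) := by
    calc (∫⁻ y in S, ENNReal.ofReal (1 / ‖y‖ ^ ((d:ℝ) + s)))
        ≤ ∫⁻ y in ({0} ∪ ⋃ k, (S ∩ ann k)), ENNReal.ofReal (1 / ‖y‖ ^ ((d:ℝ) + s)) :=
          lintegral_mono_set hcover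
      _ ≤ (∫⁻ y in ({0} : Set (EuclideanSpace ℝ (Fin d))),
              ENNReal.ofReal (1 / ‖y‖ ^ ((d:ℝ) + s)))
          + ∫⁻ y in ⋃ k, (S ∩ ann k), ENNReal.ofReal (1 / ‖y‖ ^ ((d:ℝ) + s)) :=
          lintegral_union_le _ _ _
      _ ≤ 0 + ∑' k, ∫⁻ y in S ∩ ann k, ENNReal.ofReal (1 / ‖y‖ ^ ((d:ℝ) + s)) := by
          rw [hzero]
          exact add_le_add_right (lintegral_iUnion_le _ _) 0
      _ ≤ ∑' k, ENNReal.ofReal (C0 * η^(1-s) * ρ^k) := by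
          rw [zero_add]; exact ENNReal.tsum_le_tsum hterm
      _ = ENNReal.ofReal (∑' k, C0 * η^(1-s) * ρ^k) :=
          (ENNReal.ofReal_tsum_of_nonneg (fun k => by positivity)
            ((summable_geometric_of_lt_one hρ0.le hρ1).mul_left _)).symm
      _ = ENNReal.ofReal (C0 * (1-ρ)⁻¹ * η^(1-s)) := by
          rw [tsum_mul_left, tsum_geometric_of_lt_one hρ0.le hρ1]
          congr 1; ring
  have hfin := ENNReal.toReal_mono ENNReal.ofReal_ne_top hlin
  rw [ENNReal.toReal_ofReal
    (mul_nonneg (mul_nonneg hC0pos.le h1ρ.le) (Real.rpow_nonneg hη.le _))] at hfin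
  refine hfin.trans ?_
  have hmono : η^(1-s) ≤ η^(1-sbar) + η^((d:ℝ)) := by
    rcases le_or_gt η 1 with h1 | h1
    · have ha : η^(1-s) ≤ η^(1-sbar) :=
        Real.rpow_le_rpow_of_exponent_ge hη h1 (by linarith)
      have h2 : 0 ≤ η^((d:ℝ)) := Real.rpow_nonneg hη.le _
      linarith
    · have ha : η^(1-s) ≤ η^(1:ℝ) := Real.rpow_le_rpow_of_exponent_le h1.le (by linarith)
      have hb2 : η^(1:ℝ) ≤ η^((d:ℝ)) := Real.rpow_le_rpow_of_exponent_le h1.le hD1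
      have h2 : 0 ≤ η^(1-sbar) := Real.rpow_nonneg hη.le _
      linarith
  calc C0 * (1-ρ)⁻¹ * η^(1-s) ≤ C0 * (1-ρ)⁻¹ * (η^(1-sbar) + η^((d:ℝ))) :=
        mul_le_mul_of_nonneg_left hmono (mul_nonneg hC0pos.le h1ρ.le)
    _ = (4^d/δ) * (1 - ρ)⁻¹ * (η^(1-sbar) + η^((d:ℝ))) := by rw [hC0]

/-- a uniform (in `s ∈ [0, s̄]`) modulus bounding the integral of the
kernel `|y|^{-(d+s)}` over `B_η ∖ (B_δ(δe_d) ∪ B_δ(-δe_d))`. -/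
theorem stmt_2 (d : ℕ) (hd : 0 < d) (δ sbar : ℝ) (hδ : 0 < δ)
    (hsbar : sbar ∈ Set.Ico (0:ℝ) 1) :
    ∃ ω : ℝ → ℝ, StrictMono ω ∧ Continuous ω ∧ ω 0 = 0 ∧
      ∀ s ∈ Set.Icc (0:ℝ) sbar, ∀ η : ℝ, 0 ≤ η →
        (∫ y in Metric.ball (0 : EuclideanSpace ℝ (Fin d)) η \
            (Metric.ball (δ • ed d) δ ∪ Metric.ball (-(δ • ed d)) δ),
          1 / ‖y‖ ^ ((d:ℝ) + s)) ≤ ω η := by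
  obtain ⟨hsb0, hsb1⟩ := hsbar
  set ρ := (1/2:ℝ)^(1-sbar) with hρ
  have hρ0 : 0 < ρ := Real.rpow_pos_of_pos (by norm_num) _
  have hρ1 : ρ < 1 := Real.rpow_lt_one (by norm_num) (by norm_num) (by linarith)
  set C := (4:ℝ)^d/δ * (1-ρ)⁻¹ with hC
  have hCpos : 0 < C := mul_pos (by positivity) (inv_pos.mpr (by linarith))
  have he1 : (0:ℝ) < 1 - sbar := by linarith
  have he2 : (0:ℝ) < (d:ℝ) := by exact_mod_cast hd
  refine ⟨fun η => η + C * ((max η 0)^(1-sbar) + (max η 0)^((d:ℝ))), ?_, ?_, ?_, ?_⟩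
  · -- StrictMono
    have hm : ∀ e : ℝ, 0 ≤ e → Monotone (fun t : ℝ => (max t 0)^e) := fun e he a b hab =>
      Real.rpow_le_rpow (le_max_right _ _) (max_le_max hab le_rfl) he
    exact strictMono_id.add_monotone
      (((hm _ he1.le).add (hm _ he2.le)).const_mul hCpos.le)
  · -- Continuous
    have hc : ∀ e : ℝ, 0 ≤ e → Continuous (fun t : ℝ => (max t 0)^e) := fun e he =>
      (continuous_id.max continuous_const).rpow_const fun x => Or.inr he
    exact continuous_id.add (continuous_const.mul ((hc _ he1.le).add (hc _ he2.le)))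
  · simp [Real.zero_rpow (ne_of_gt he1), Real.zero_rpow (ne_of_gt he2)]
  · intro s hs η hη
    rcases eq_or_lt_of_le hη with h0 | h0
    · rw [← h0]
      simp [Metric.ball_zero, Real.zero_rpow (ne_of_gt he1), Real.zero_rpow (ne_of_gt he2)]
    · have hkey := key_bound d hd δ sbar s η hδ hsb0 hsb1 hs.1 hs.2 h0
      simp only []
      have hmax : max η 0 = η := max_eq_left hη
      calc (∫ y in Metric.ball (0 : EuclideanSpace ℝ (Fin d)) η \
            (Metric.ball (δ • ed d) δ ∪ Metric.ball (-(δ • ed d)) δ),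
          1 / ‖y‖ ^ ((d:ℝ) + s))
          ≤ (4:ℝ)^d/δ * (1 - ρ)⁻¹ * (η^(1-sbar) + η^((d:ℝ))) := hkey
        _ = C * (η^(1-sbar) + η^((d:ℝ))) := by rw [hC]
        _ ≤ η + C * (η^(1-sbar) + η^((d:ℝ))) := by linarith
        _ = (fun η => η + C * ((max η 0)^(1-sbar) + (max η 0)^((d:ℝ)))) η := by
            simp only [hmax]
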